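/- Let Φ : X → Y be a surjective map between finite sets with uniform measures, such that all fibers Φ^{-1}(y) have the same cardinality. Suppose (Y,d_Y) with the uniform measure is (c₁,λ₁)-concentrated, each fiber Φ^{-1}(y) with its uniform measure and the metric d_X restricted to it is (c₂,λ₂)-concentrated, and for all y₁,y₂ ∈ Y there exists a coupling of the uniform measures on Φ^{-1}(y₁) and Φ^{-1}(y₂) supported on pairs (x₁,x₂) with d_X(x₁,x₂) ≤ d_Y(y₁,y₂). Then (X, d_X) with the uniform measure is (c₁+c₂, min(λ₁,λ₂)/4)-concentrated. -/

import Mathlib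

open Finset

private lemma ncard_eq_filter_card' {α : Type*} [Fintype α] (p : α → Prop) [DecidablePred p] :
    {x | p x}.ncard = (Finset.univ.filter p).card := by
  rw [← Set.ncard_coe_finset]; congr 1; ext x; simp

private lemma glip_aux {X Y : Type*} [Fintype X] [Fintype Y] [MetricSpace X] [MetricSpace Y]
    [DecidableEq Y]
    (Φ : X → Y) (f : X → ℝ) (hf : ∀ x₁ x₂, |f x₁ - f x₂| ≤ dist x₁ x₂)
    (m : ℕ) (hm : ∀ y, (Finset.univ.filter fun x => Φ x = y).card = m) (hm0 : 0 < m)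
    (y₁ y₂ : Y)
    (w : X → X → ℝ) (hw0 : ∀ a b, 0 ≤ w a b)
    (hws : ∀ a b, w a b ≠ 0 → Φ a = y₁ ∧ Φ b = y₂ ∧ dist a b ≤ dist y₁ y₂)
    (hw1 : ∀ a, Φ a = y₁ → ∑ b, w a b = 1 / ((Finset.univ.filter fun x => Φ x = y₁).card : ℝ))
    (hw2 : ∀ b, Φ b = y₂ → ∑ a, w a b = 1 / ((Finset.univ.filter fun x => Φ x = y₂).card : ℝ)) :
    |(∑ x ∈ Finset.univ.filter fun x => Φ x = y₁, f x) / (m:ℝ)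
      - (∑ x ∈ Finset.univ.filter fun x => Φ x = y₂, f x) / (m:ℝ)| ≤ dist y₁ y₂ := by
  have hmR : (0:ℝ) < m := by exact_mod_cast hm0
  have hz1 : ∀ a, Φ a ≠ y₁ → ∀ b, w a b = 0 := fun a ha b => by
    by_contra h; exact ha (hws a b h).1
  have hz2 : ∀ b, Φ b ≠ y₂ → ∀ a, w a b = 0 := fun b hb a => by
    by_contra h; exact hb (hws a b h).2.1
  have e1 : (∑ x ∈ Finset.univ.filter fun x => Φ x = y₁, f x) / (m:ℝ)
      = ∑ a, ∑ b, w a b * f a := by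
    have key : ∀ a : X, (∑ b, w a b * f a) = if Φ a = y₁ then f a / m else 0 := by
      intro a
      rw [← Finset.sum_mul]
      by_cases h : Φ a = y₁
      · rw [hw1 a h, hm y₁]; simp [h]; ring
      · simp [h, hz1 a h]
    rw [Finset.sum_congr rfl fun a _ => key a, ← Finset.sum_filter, ← Finset.sum_div]
  have e2 : (∑ x ∈ Finset.univ.filter fun x => Φ x = y₂, f x) / (m:ℝ)
      = ∑ a, ∑ b, w a b * f b := by
    rw [Finset.sum_comm]
    have key : ∀ b : X, (∑ a, w a b * f b) = if Φ b = y₂ then f b / m else 0 := by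
      intro b
      rw [← Finset.sum_mul]
      by_cases h : Φ b = y₂
      · rw [hw2 b h, hm y₂]; simp [h]; ring
      · simp [h, hz2 b h]
    rw [Finset.sum_congr rfl fun b _ => key b, ← Finset.sum_filter, ← Finset.sum_div]
  have etot : ∑ a, ∑ b, w a b = 1 := by
    have key : ∀ a : X, (∑ b, w a b) = if Φ a = y₁ then (1:ℝ) / m else 0 := by
      intro a
      by_cases h : Φ a = y₁
      · rw [hw1 a h, hm y₁]; simp [h]
      · simp [h, hz1 a h]
    rw [Finset.sum_congr rfl fun a _ => key a, ← Finset.sum_filter, Finset.sum_const, hm y₁]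
    rw [nsmul_eq_mul, mul_one_div_cancel hmR.ne']
  rw [e1, e2, ← Finset.sum_sub_distrib]
  calc |∑ a, (∑ b, w a b * f a - ∑ b, w a b * f b)|
      = |∑ a, ∑ b, w a b * (f a - f b)| := by
        congr 1; refine Finset.sum_congr rfl fun a _ => ?_
        rw [← Finset.sum_sub_distrib]
        exact Finset.sum_congr rfl fun b _ => by ring
    _ ≤ ∑ a, |∑ b, w a b * (f a - f b)| := Finset.abs_sum_le_sum_abs _ _
    _ ≤ ∑ a, ∑ b, |w a b * (f a - f b)| :=
        Finset.sum_le_sum fun a _ => Finset.abs_sum_le_sum_abs _ _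
    _ ≤ ∑ a, ∑ b, w a b * dist y₁ y₂ := by
        refine Finset.sum_le_sum fun a _ => Finset.sum_le_sum fun b _ => ?_
        by_cases h : w a b = 0
        · simp only [h, zero_mul, abs_zero]; positivity
        · rw [abs_mul, abs_of_nonneg (hw0 a b)]
          exact mul_le_mul_of_nonneg_left ((hf a b).trans (hws a b h).2.2) (hw0 a b)
    _ = dist y₁ y₂ := by
        rw [show (∑ a, ∑ b, w a b * dist y₁ y₂) = (∑ a, ∑ b, w a b) * dist y₁ y₂ by
            rw [Finset.sum_mul]; exact Finset.sum_congr rfl fun a _ => (Finset.sum_mul ..).symm,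
          etot, one_mul]




/-- Fibered concentration for finite uniform spaces: if `Φ : X → Y` is surjective with
equal-size fibers, the base `Y` is `(c₁,λ₁)`-concentrated, every fiber is
`(c₂,λ₂)`-concentrated, and uniform measures on any two fibers admit couplings supported
on pairs at distance at most the base distance, then `X` (uniform measure) is
`(c₁+c₂, min(λ₁,λ₂)/4)`-concentrated. -/
theorem stmt15 {X Y : Type*} [Fintype X] [Fintype Y] [Nonempty X]
    [MetricSpace X] [MetricSpace Y] [DecidableEq Y]
    (Φ : X → Y) (hsurj : Function.Surjective Φ)
    (hfib : ∀ y₁ y₂ : Y, (Finset.univ.filter fun x => Φ x = y₁).card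
      = (Finset.univ.filter fun x => Φ x = y₂).card)
    (c₁ lam₁ c₂ lam₂ : ℝ) (hc₁ : 0 < c₁) (hl₁ : 0 < lam₁) (hc₂ : 0 < c₂) (hl₂ : 0 < lam₂)
    (hY : ∀ f : Y → ℝ, (∀ y₁ y₂, |f y₁ - f y₂| ≤ dist y₁ y₂) → ∀ ε > 0,
      ({y : Y | ε < |f y - (∑ y', f y') / (Fintype.card Y : ℝ)|}.ncard : ℝ)
          / Fintype.card Y
        < c₁ * Real.exp (-lam₁ * ε ^ 2))
    (hfibconc : ∀ y : Y, ∀ f : X → ℝ,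
      (∀ x₁ x₂, Φ x₁ = y → Φ x₂ = y → |f x₁ - f x₂| ≤ dist x₁ x₂) → ∀ ε > 0,
      ({x : X | Φ x = y ∧
            ε < |f x - (∑ x' ∈ Finset.univ.filter fun x' => Φ x' = y, f x')
              / ((Finset.univ.filter fun x' => Φ x' = y).card : ℝ)|}.ncard : ℝ)
          / (Finset.univ.filter fun x' => Φ x' = y).card
        < c₂ * Real.exp (-lam₂ * ε ^ 2))
    (hcouple : ∀ y₁ y₂ : Y, ∃ w : X → X → ℝ,
      (∀ a b, 0 ≤ w a b) ∧
      (∀ a b, w a b ≠ 0 → Φ a = y₁ ∧ Φ b = y₂ ∧ dist a b ≤ dist y₁ y₂) ∧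
      (∀ a, Φ a = y₁ → ∑ b, w a b
        = 1 / ((Finset.univ.filter fun x => Φ x = y₁).card : ℝ)) ∧
      (∀ b, Φ b = y₂ → ∑ a, w a b
        = 1 / ((Finset.univ.filter fun x => Φ x = y₂).card : ℝ))) :
    ∀ f : X → ℝ, (∀ x₁ x₂, |f x₁ - f x₂| ≤ dist x₁ x₂) → ∀ ε > 0,
      ({x : X | ε < |f x - (∑ x', f x') / (Fintype.card X : ℝ)|}.ncard : ℝ)
          / Fintype.card X
        < (c₁ + c₂) * Real.exp (-(min lam₁ lam₂) / 4 * ε ^ 2) := by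
  classical
  have hYne : Nonempty Y := Nonempty.map Φ ‹Nonempty X›
  intro f hf ε hε
  obtain ⟨x₀⟩ := ‹Nonempty X›
  set m : ℕ := (Finset.univ.filter fun x => Φ x = Φ x₀).card with hmdef
  have hm : ∀ y, (Finset.univ.filter fun x => Φ x = y).card = m := fun y => hfib y (Φ x₀)
  have hm0 : 0 < m := by
    rw [hmdef]
    exact Finset.card_pos.mpr ⟨x₀, by simp⟩
  have hmR : (0:ℝ) < m := by exact_mod_cast hm0
  have hcardX : Fintype.card X = Fintype.card Y * m := by
    rw [← Finset.card_univ, Finset.card_eq_sum_card_fiberwise (fun x _ => Finset.mem_univ (Φ x))]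
    simp [hm, Finset.card_univ, Finset.sum_const]
  have hX0 : (0:ℝ) < Fintype.card X := by exact_mod_cast Fintype.card_pos
  have hY0 : (0:ℝ) < Fintype.card Y := by exact_mod_cast Fintype.card_pos
  set g : Y → ℝ := fun y => (∑ x ∈ Finset.univ.filter fun x' => Φ x' = y, f x) / (m:ℝ)
    with hgdef
  have hglip : ∀ y₁ y₂, |g y₁ - g y₂| ≤ dist y₁ y₂ := by
    intro y₁ y₂
    obtain ⟨w, hw0, hws, hw1, hw2⟩ := hcouple y₁ y₂
    exact glip_aux Φ f hf m hm hm0 y₁ y₂ w hw0 hws hw1 hw2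
  set Eg : ℝ := (∑ y, g y) / (Fintype.card Y : ℝ) with hEgdef
  have hmean : (∑ x, f x) / (Fintype.card X : ℝ) = Eg := by
    have h1 : ∑ y, g y = (∑ x, f x) / (m:ℝ) := by
      rw [hgdef, ← Finset.sum_div, Finset.sum_fiberwise_of_maps_to
        (fun x _ => Finset.mem_univ (Φ x)) f]
    rw [hEgdef, h1, hcardX, div_div]
    push_cast
    ring_nf
  -- the three finsets
  set S : Finset X := Finset.univ.filter
    (fun x => ε < |f x - (∑ x', f x') / (Fintype.card X : ℝ)|) with hSdef
  set A : Finset X := Finset.univ.filter (fun x => ε/2 < |f x - g (Φ x)|) with hAdef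
  set B : Finset X := Finset.univ.filter (fun x => ε/2 < |g (Φ x) - Eg|) with hBdef
  have hSsub : S ⊆ A ∪ B := by
    intro x hx
    rw [hSdef, Finset.mem_filter] at hx
    rw [Finset.mem_union, hAdef, hBdef, Finset.mem_filter, Finset.mem_filter]
    by_contra h
    push_neg at h
    obtain ⟨h1, h2⟩ := h
    have h1' := h1 (Finset.mem_univ x)
    have h2' := h2 (Finset.mem_univ x)
    have htri := abs_sub_le (f x) (g (Φ x)) Eg
    have := hx.2
    rw [hmean] at this
    linarith
  -- bound on A
  have hA : (A.card : ℝ) < (Fintype.card X : ℝ) * (c₂ * Real.exp (-lam₂ * (ε/2) ^ 2)) := by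
    have hfiber : ∀ y : Y, A.filter (fun x => Φ x = y)
        = Finset.univ.filter (fun x => Φ x = y ∧ ε/2 < |f x - g y|) := by
      intro y
      ext x
      simp only [hAdef, Finset.mem_filter, Finset.mem_univ, true_and]
      constructor
      · rintro ⟨h1, h2⟩; exact ⟨h2, h2 ▸ h1⟩
      · rintro ⟨h1, h2⟩; exact ⟨h1 ▸ h2, h1⟩
    have hAy : ∀ y : Y, ((A.filter (fun x => Φ x = y)).card : ℝ)
        < (m : ℝ) * (c₂ * Real.exp (-lam₂ * (ε/2) ^ 2)) := by
      intro y
      have hc := hfibconc y f (fun x₁ x₂ _ _ => hf x₁ x₂) (ε/2) (by positivity)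
      rw [ncard_eq_filter_card', hm y] at hc
      rw [hfiber y]
      have : (Finset.univ.filter fun x => Φ x = y ∧ ε/2 < |f x - g y|)
          = (Finset.univ.filter fun x => Φ x = y ∧
              ε/2 < |f x - (∑ x' ∈ Finset.univ.filter fun x' => Φ x' = y, f x') / (m:ℝ)|) := by
        rfl
      rw [this]
      exact lt_of_lt_of_eq ((div_lt_iff₀ hmR).mp hc) (mul_comm _ _)
    have hcount : A.card = ∑ y : Y, (A.filter (fun x => Φ x = y)).card :=
      Finset.card_eq_sum_card_fiberwise (fun x _ => Finset.mem_univ (Φ x))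
    rw [hcount]
    push_cast
    calc (∑ y : Y, ((A.filter (fun x => Φ x = y)).card : ℝ))
        < ∑ _y : Y, (m : ℝ) * (c₂ * Real.exp (-lam₂ * (ε/2) ^ 2)) :=
          Finset.sum_lt_sum_of_nonempty Finset.univ_nonempty (fun y _ => hAy y)
      _ = (Fintype.card X : ℝ) * (c₂ * Real.exp (-lam₂ * (ε/2) ^ 2)) := by
          rw [Finset.sum_const, Finset.card_univ, hcardX]
          push_cast
          ring
  -- bound on B
  have hB : (B.card : ℝ) < (Fintype.card X : ℝ) * (c₁ * Real.exp (-lam₁ * (ε/2) ^ 2)) := by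
    set T : Finset Y := Finset.univ.filter (fun y => ε/2 < |g y - Eg|) with hTdef
    have hT : (T.card : ℝ) < (Fintype.card Y : ℝ) * (c₁ * Real.exp (-lam₁ * (ε/2) ^ 2)) := by
      have hc := hY g hglip (ε/2) (by positivity)
      rw [ncard_eq_filter_card'] at hc
      rw [← hEgdef] at hc
      exact lt_of_lt_of_eq ((div_lt_iff₀ hY0).mp hc) (mul_comm _ _)
    have hcount : B.card = ∑ y : Y, (B.filter (fun x => Φ x = y)).card :=
      Finset.card_eq_sum_card_fiberwise (fun x _ => Finset.mem_univ (Φ x))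
    have hfiber : ∀ y : Y, (B.filter (fun x => Φ x = y)).card
        = if ε/2 < |g y - Eg| then m else 0 := by
      intro y
      by_cases h : ε/2 < |g y - Eg|
      · rw [if_pos h, ← hm y]
        congr 1
        ext x
        simp only [hBdef, Finset.mem_filter, Finset.mem_univ, true_and]
        constructor
        · rintro ⟨_, h2⟩; exact h2
        · intro h2; exact ⟨h2 ▸ h, h2⟩
      · rw [if_neg h]
        rw [Finset.card_eq_zero]
        ext x
        simp only [hBdef, Finset.mem_filter, Finset.mem_univ, true_and,
          Finset.notMem_empty, iff_false, not_and]
        intro hx hy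
        exact h (hy ▸ hx)
    have hBcard : B.card = m * T.card := by
      rw [hcount, Finset.sum_congr rfl fun y _ => hfiber y, ← Finset.sum_filter, ← hTdef,
        Finset.sum_const, smul_eq_mul, Nat.mul_comm]
    rw [hBcard]
    push_cast
    calc (m : ℝ) * T.card < (m:ℝ) * ((Fintype.card Y : ℝ) * (c₁ * Real.exp (-lam₁ * (ε/2)^2)))
          := by exact (mul_lt_mul_iff_right₀ hmR).mpr hT
      _ = (Fintype.card X : ℝ) * (c₁ * Real.exp (-lam₁ * (ε/2) ^ 2)) := by
          rw [hcardX]; push_cast; ring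
  -- combine
  rw [ncard_eq_filter_card', ← hSdef]
  have hScard : (S.card : ℝ) ≤ (A.card : ℝ) + (B.card : ℝ) := by
    exact_mod_cast le_trans (Finset.card_le_card hSsub) (Finset.card_union_le A B)
  have hstep : (S.card : ℝ) / (Fintype.card X : ℝ)
      < c₂ * Real.exp (-lam₂ * (ε/2) ^ 2) + c₁ * Real.exp (-lam₁ * (ε/2) ^ 2) := by
    rw [div_lt_iff₀ hX0]
    nlinarith [hA, hB]
  have hE : Real.exp (-lam₂ * (ε/2) ^ 2) ≤ Real.exp (-(min lam₁ lam₂) / 4 * ε ^ 2) := by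
    apply Real.exp_le_exp.mpr
    nlinarith [min_le_right lam₁ lam₂, sq_nonneg ε]
  have hE' : Real.exp (-lam₁ * (ε/2) ^ 2) ≤ Real.exp (-(min lam₁ lam₂) / 4 * ε ^ 2) := by
    apply Real.exp_le_exp.mpr
    nlinarith [min_le_left lam₁ lam₂, sq_nonneg ε]
  have hEpos : 0 < Real.exp (-(min lam₁ lam₂) / 4 * ε ^ 2) := Real.exp_pos _
  calc (S.card : ℝ) / (Fintype.card X : ℝ)
      < c₂ * Real.exp (-lam₂ * (ε/2) ^ 2) + c₁ * Real.exp (-lam₁ * (ε/2) ^ 2) := hstep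
    _ ≤ (c₁ + c₂) * Real.exp (-(min lam₁ lam₂) / 4 * ε ^ 2) := by
        nlinarith [mul_le_mul_of_nonneg_left hE hc₂.le, mul_le_mul_of_nonneg_left hE' hc₁.le]
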